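/- With F̃_a^{(s)}(q,t) = Σ_d q^{Σ_i d(i)} t^{Σ_i i·d(i)} summed over d : {1,...,a-1} → {0,...,s} with sparse support, we have F̃_{a+1}^{(s)}(q,t) = F̃_a^{(s)}(qt, t) + qt·(1 + qt + ... + (qt)^{s-1})·F̃_{a-1}^{(s)}(qt^2, t) for a ≥ 1. -/

import Mathlib

def sparseFuns (s a : ℕ) : Finset (Fin (a - 1) → Fin (s + 1)) :=
  Finset.univ.filter
    (fun d => ∀ i j : Fin (a - 1), 0 < (d i : ℕ) → 0 < (d j : ℕ) → (i : ℕ) + 1 ≠ (j : ℕ))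

open MvPolynomial in
noncomputable def Ftilde (s a : ℕ) : MvPolynomial (Fin 2) ℤ :=
  ∑ d ∈ sparseFuns s a,
    X 0 ^ (∑ i : Fin (a - 1), (d i : ℕ)) * X 1 ^ (∑ i : Fin (a - 1), ((i : ℕ) + 1) * (d i : ℕ))

open MvPolynomial Finset

def SF (s n : ℕ) : Finset (Fin n → Fin (s + 1)) :=
  Finset.univ.filter
    (fun d => ∀ i j : Fin n, 0 < (d i : ℕ) → 0 < (d j : ℕ) → (i : ℕ) + 1 ≠ (j : ℕ))

lemma mem_SF {s n : ℕ} {d : Fin n → Fin (s + 1)} :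
    d ∈ SF s n ↔ ∀ i j : Fin n, 0 < (d i : ℕ) → 0 < (d j : ℕ) → (i : ℕ) + 1 ≠ (j : ℕ) := by
  simp [SF]

lemma Ftilde_eq (s n : ℕ) :
    Ftilde s (n + 1) =
      ∑ d ∈ SF s n,
        X 0 ^ (∑ i : Fin n, (d i : ℕ)) * X 1 ^ (∑ i : Fin n, ((i : ℕ) + 1) * (d i : ℕ)) := rfl

lemma bind_Ftilde (s n : ℕ) (f : Fin 2 → MvPolynomial (Fin 2) ℤ) :
    bind₁ f (Ftilde s (n + 1)) =
      ∑ e ∈ SF s n,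
        f 0 ^ (∑ i : Fin n, ((e i : ℕ))) * f 1 ^ (∑ i : Fin n, ((i : ℕ) + 1) * (e i : ℕ)) := by
  rw [Ftilde_eq]
  simp [map_sum]

lemma bind1_eq (s n : ℕ) :
    bind₁ (fun j : Fin 2 => if j = 0 then (X 0 * X 1 : MvPolynomial (Fin 2) ℤ) else X 1) (Ftilde s (n + 1)) =
      ∑ e ∈ SF s n,
        (X 0 * X 1) ^ (∑ i : Fin n, (e i : ℕ)) * X 1 ^ (∑ i : Fin n, ((i : ℕ) + 1) * (e i : ℕ)) := by
  rw [bind_Ftilde]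
  norm_num

lemma bind2_eq (s n : ℕ) :
    bind₁ (fun j : Fin 2 => if j = 0 then (X 0 * X 1 ^ 2 : MvPolynomial (Fin 2) ℤ) else X 1) (Ftilde s (n + 1)) =
      ∑ e ∈ SF s n,
        (X 0 * X 1 ^ 2) ^ (∑ i : Fin n, (e i : ℕ)) * X 1 ^ (∑ i : Fin n, ((i : ℕ) + 1) * (e i : ℕ)) := by
  rw [bind_Ftilde]
  norm_num

lemma Ftilde_zero' (s : ℕ) : Ftilde s 0 = 1 := by
  simp [Ftilde, sparseFuns]

lemma base_case (s : ℕ) :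
    Ftilde s 2 =
      (bind₁ (fun j : Fin 2 => if j = 0 then X 0 * X 1 else X 1)) (Ftilde s 1) +
        (X 0 * X 1) * (∑ k ∈ Finset.range s, (X 0 * X 1) ^ k) *
          (bind₁ (fun j : Fin 2 => if j = 0 then X 0 * X 1 ^ 2 else X 1)) (Ftilde s 0) := by
  have h1 : Ftilde s 1 = 1 := by
    rw [Ftilde_eq]
    simp [SF]
  rw [Ftilde_zero', h1, map_one, map_one, mul_one]
  have hfilter : SF s 1 = Finset.univ := by
    apply Finset.filter_true_of_mem
    intro d _ i j _ _
    have : (j : ℕ) = 0 := Fin.val_eq_zero j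
    omega
  have h2 := Ftilde_eq s 1
  norm_num at h2
  rw [h2, hfilter]
  rw [Fintype.sum_equiv (Equiv.funUnique (Fin 1) (Fin (s+1)))
      (fun d => X 0 ^ ((d 0 : ℕ)) * X 1 ^ ((d 0 : ℕ)))
      (fun v : Fin (s+1) => X 0 ^ (v : ℕ) * X 1 ^ (v : ℕ)) (fun d => rfl)]
  rw [Fin.sum_univ_eq_sum_range (fun v => X 0 ^ v * X 1 ^ v) (s+1)]
  rw [Finset.sum_range_succ' (fun v => X 0 ^ v * X 1 ^ v) s]
  rw [Finset.mul_sum]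
  simp only [pow_zero, one_mul, mul_one]
  rw [add_comm]
  congr 1
  refine Finset.sum_congr rfl fun k _ => ?_
  ring

lemma main_case (s m : ℕ) :
    Ftilde s (m + 1 + 1 + 1) =
      (bind₁ (fun j : Fin 2 => if j = 0 then X 0 * X 1 else X 1)) (Ftilde s (m + 1 + 1)) +
        (X 0 * X 1) * (∑ k ∈ Finset.range s, (X 0 * X 1) ^ k) *
          (bind₁ (fun j : Fin 2 => if j = 0 then X 0 * X 1 ^ 2 else X 1)) (Ftilde s (m + 1)) := by
  rw [Ftilde_eq s (m + 1 + 1), bind1_eq s (m + 1), bind2_eq s m]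
  -- split off the RHS second product into a double sum
  have hsplit :
      ((X 0 * X 1 : MvPolynomial (Fin 2) ℤ)) * (∑ k ∈ Finset.range s, (X 0 * X 1) ^ k) *
          (∑ e ∈ SF s m,
            (X 0 * X 1 ^ 2) ^ (∑ i : Fin m, (e i : ℕ)) *
              X 1 ^ (∑ i : Fin m, ((i : ℕ) + 1) * (e i : ℕ))) =
        ∑ p ∈ Finset.range s ×ˢ SF s m,
          (X 0 * X 1) ^ (p.1 + 1) *
            ((X 0 * X 1 ^ 2) ^ (∑ i : Fin m, (p.2 i : ℕ)) *
              X 1 ^ (∑ i : Fin m, ((i : ℕ) + 1) * (p.2 i : ℕ))) := by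
    rw [Finset.sum_product]
    rw [mul_assoc, Finset.sum_mul_sum, Finset.mul_sum]
    refine Finset.sum_congr rfl fun k _ => ?_
    rw [Finset.mul_sum]
    refine Finset.sum_congr rfl fun e _ => ?_
    ring
  rw [hsplit]
  rw [← Finset.sum_filter_add_sum_filter_not (SF s (m + 1 + 1)) (fun d => d 0 = 0)]
  congr 1
  · -- part A
    refine Finset.sum_bij' (fun d _ => Fin.tail d) (fun e _ => Fin.cons 0 e) ?_ ?_ ?_ ?_ ?_
    · intro d hd
      rw [Finset.mem_filter, mem_SF] at hd
      rw [mem_SF]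
      intro i j h1 h2
      simp only [Fin.tail] at h1 h2
      have h3 := hd.1 i.succ j.succ h1 h2
      simp only [Fin.val_succ] at h3
      omega
    · intro e he
      rw [mem_SF] at he
      rw [Finset.mem_filter, mem_SF]
      refine ⟨?_, rfl⟩
      intro i j h1 h2
      rcases Fin.eq_zero_or_eq_succ i with rfl | ⟨i', rfl⟩
      · simp at h1
      · rcases Fin.eq_zero_or_eq_succ j with rfl | ⟨j', rfl⟩
        · simp
        · rw [Fin.cons_succ] at h1 h2
          have h3 := he i' j' h1 h2
          simp only [Fin.val_succ]
          omega
    · intro d hd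
      rw [Finset.mem_filter] at hd
      rw [← hd.2, Fin.cons_self_tail]
    · intro e _
      rw [Fin.tail_cons]
    · intro d hd
      rw [Finset.mem_filter] at hd
      have h0 : (d 0 : ℕ) = 0 := by rw [hd.2]; rfl
      have e1 : (∑ i : Fin (m + 1 + 1), (d i : ℕ)) =
          ∑ i : Fin (m + 1), (Fin.tail d i : ℕ) := by
        rw [Fin.sum_univ_succ]
        simp [Fin.tail, h0]
      have e2 : (∑ i : Fin (m + 1 + 1), ((i : ℕ) + 1) * (d i : ℕ)) =
          (∑ i : Fin (m + 1), (Fin.tail d i : ℕ)) +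
            ∑ i : Fin (m + 1), ((i : ℕ) + 1) * (Fin.tail d i : ℕ) := by
        rw [Fin.sum_univ_succ]
        simp only [Fin.val_zero, Fin.val_succ, h0, one_mul, mul_zero, zero_add, Fin.tail]
        rw [← Finset.sum_add_distrib]
        refine Finset.sum_congr rfl fun i _ => ?_
        ring
      rw [e1, e2]
      ring
  · -- part B
    refine Finset.sum_bij'
      (fun d _ => (((d 0 : ℕ) - 1), Fin.tail (Fin.tail d)))
      (fun p hp => Fin.cons
        ⟨p.1 + 1, Nat.succ_lt_succ (Finset.mem_range.mp (Finset.mem_product.mp hp).1)⟩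
        (Fin.cons 0 p.2)) ?_ ?_ ?_ ?_ ?_
    · intro d hd
      rw [Finset.mem_filter, mem_SF] at hd
      have hd0 : 0 < (d 0 : ℕ) := Nat.pos_of_ne_zero (fun h => hd.2 (Fin.ext h))
      rw [Finset.mem_product, Finset.mem_range, mem_SF]
      dsimp only
      constructor
      · have := (d 0).isLt
        omega
      · intro i j h1 h2
        simp only [Fin.tail] at h1 h2
        have h3 := hd.1 i.succ.succ j.succ.succ h1 h2
        simp only [Fin.val_succ] at h3
        omega
    · intro p hp
      rw [Finset.mem_product, Finset.mem_range, mem_SF] at hp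
      rw [Finset.mem_filter, mem_SF]
      constructor
      · intro i j h1 h2
        rcases Fin.eq_zero_or_eq_succ i with rfl | ⟨i', rfl⟩
        · rcases Fin.eq_zero_or_eq_succ j with rfl | ⟨j', rfl⟩
          · simp
          · rcases Fin.eq_zero_or_eq_succ j' with rfl | ⟨j'', rfl⟩
            · rw [Fin.cons_succ, Fin.cons_zero] at h2
              simp at h2
            · simp only [Fin.val_zero, Fin.val_succ]
              omega
        · rcases Fin.eq_zero_or_eq_succ i' with rfl | ⟨i'', rfl⟩
          · rw [Fin.cons_succ, Fin.cons_zero] at h1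
            simp at h1
          · rcases Fin.eq_zero_or_eq_succ j with rfl | ⟨j', rfl⟩
            · simp only [Fin.val_succ, Fin.val_zero]
              omega
            · rcases Fin.eq_zero_or_eq_succ j' with rfl | ⟨j'', rfl⟩
              · rw [Fin.cons_succ, Fin.cons_zero] at h2
                simp at h2
              · rw [Fin.cons_succ, Fin.cons_succ] at h1 h2
                have h3 := hp.2 i'' j'' h1 h2
                simp only [Fin.val_succ]
                omega
      · intro h
        have h2 := congrArg Fin.val h
        rw [Fin.cons_zero] at h2
        simp at h2
    · intro d hd
      rw [Finset.mem_filter, mem_SF] at hd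
      have hd0 : 0 < (d 0 : ℕ) := Nat.pos_of_ne_zero (fun h => hd.2 (Fin.ext h))
      have hd1 : d (Fin.succ 0) = 0 := by
        by_contra h
        have h1 : 0 < (d (Fin.succ 0) : ℕ) := Nat.pos_of_ne_zero (fun hv => h (Fin.ext hv))
        have := hd.1 0 (Fin.succ 0) hd0 h1
        simp at this
      dsimp only
      have hv : ∀ (h : (d 0 : ℕ) - 1 + 1 < s + 1),
          (⟨(d 0 : ℕ) - 1 + 1, h⟩ : Fin (s + 1)) = d 0 := by
        intro h
        apply Fin.ext
        simp only []
        omega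
      rw [hv]
      rw [show (0 : Fin (s + 1)) = Fin.tail d 0 from by
        rw [show Fin.tail d 0 = d (Fin.succ 0) from rfl, hd1]]
      rw [Fin.cons_self_tail, Fin.cons_self_tail]
    · intro p hp
      refine Prod.ext ?_ ?_
      · simp
      · rw [Fin.tail_cons, Fin.tail_cons]
    · intro d hd
      rw [Finset.mem_filter, mem_SF] at hd
      have hd0 : 0 < (d 0 : ℕ) := Nat.pos_of_ne_zero (fun h => hd.2 (Fin.ext h))
      have hd1 : (d (Fin.succ 0) : ℕ) = 0 := by
        by_contra h
        have h1 : 0 < (d (Fin.succ 0) : ℕ) := Nat.pos_of_ne_zero h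
        have := hd.1 0 (Fin.succ 0) hd0 h1
        simp at this
      have e1 : (∑ i : Fin (m + 1 + 1), (d i : ℕ)) =
          (d 0 : ℕ) + ∑ i : Fin m, (Fin.tail (Fin.tail d) i : ℕ) := by
        rw [Fin.sum_univ_succ, Fin.sum_univ_succ, hd1]
        simp [Fin.tail]
      have e2 : (∑ i : Fin (m + 1 + 1), ((i : ℕ) + 1) * (d i : ℕ)) =
          (d 0 : ℕ) + (2 * (∑ i : Fin m, (Fin.tail (Fin.tail d) i : ℕ)) +
            ∑ i : Fin m, ((i : ℕ) + 1) * (Fin.tail (Fin.tail d) i : ℕ)) := by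
        rw [Fin.sum_univ_succ, Fin.sum_univ_succ, hd1]
        simp only [Fin.val_zero, Fin.val_succ, one_mul, mul_zero, zero_add, add_zero, Fin.tail]
        rw [Finset.mul_sum, ← Finset.sum_add_distrib]
        congr 1
        refine Finset.sum_congr rfl fun i _ => ?_
        ring
      have hval : (d 0 : ℕ) - 1 + 1 = (d 0 : ℕ) := by omega
      dsimp only
      rw [e1, e2, hval]
      ring

open MvPolynomial in
/-- `F̃_{a+1}(q,t) = F̃_a(qt,t) + qt(1 + qt + ... + (qt)^{s-1}) F̃_{a-1}(qt²,t)`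
for `a ≥ 1`. -/
theorem Ftilde_recurrence_substituted (s : ℕ) (hs : 0 < s) (a : ℕ) (ha : 1 ≤ a) :
    Ftilde s (a + 1) =
      (bind₁ (fun j : Fin 2 => if j = 0 then X 0 * X 1 else X 1)) (Ftilde s a) +
        (X 0 * X 1) * (∑ k ∈ Finset.range s, (X 0 * X 1) ^ k) *
          (bind₁ (fun j : Fin 2 => if j = 0 then X 0 * X 1 ^ 2 else X 1)) (Ftilde s (a - 1)) := by
  obtain ⟨n, rfl⟩ : ∃ n, a = n + 1 := ⟨a - 1, (Nat.succ_pred_eq_of_pos ha).symm⟩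
  rcases n with _ | m
  · exact base_case s
  · exact main_case s m
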